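/- Let (A, C, B) be a recollement of abelian categories. Then the following are equivalent: (a) i^* is an exact functor; (b) i^! j_! = 0; (c) i^! j_! j^* = 0. -/

import Mathlib

open CategoryTheory CategoryTheory.Limits

universe v₁ v₂ v₃ u₁ u₂ u₃

/-- A recollement of abelian categories `(𝒜, 𝒞, ℬ)`, consisting of additive functors
`i_* : 𝒜 ⥤ 𝒞`, `i^*, i^! : 𝒞 ⥤ 𝒜`, `j^* : 𝒞 ⥤ ℬ`, `j_!, j_* : ℬ ⥤ 𝒞` with adjoint pairs
`(i^*, i_*)`, `(i_*, i^!)`, `(j_!, j^*)`, `(j^*, j_*)`, with `i_*`, `j_!`, `j_*` fully faithful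
and the essential image of `i_*` equal to the kernel of `j^*`. -/
structure Recollement (𝒜 : Type u₁) (𝒞 : Type u₂) (ℬ : Type u₃)
    [Category.{v₁} 𝒜] [Category.{v₂} 𝒞] [Category.{v₃} ℬ]
    [Abelian 𝒜] [Abelian 𝒞] [Abelian ℬ] where
  /-- the functor `i^* : 𝒞 ⥤ 𝒜` -/
  iStar : 𝒞 ⥤ 𝒜
  /-- the functor `i_* : 𝒜 ⥤ 𝒞` -/
  iIns : 𝒜 ⥤ 𝒞
  /-- the functor `i^! : 𝒞 ⥤ 𝒜` -/
  iShriek : 𝒞 ⥤ 𝒜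
  /-- the functor `j_! : ℬ ⥤ 𝒞` -/
  jShriek : ℬ ⥤ 𝒞
  /-- the functor `j^* : 𝒞 ⥤ ℬ` -/
  jStar : 𝒞 ⥤ ℬ
  /-- the functor `j_* : ℬ ⥤ 𝒞` -/
  jIns : ℬ ⥤ 𝒞
  iStar_additive : iStar.Additive
  iIns_additive : iIns.Additive
  iShriek_additive : iShriek.Additive
  jShriek_additive : jShriek.Additive
  jStar_additive : jStar.Additive
  jIns_additive : jIns.Additive
  /-- the adjunction `i^* ⊣ i_*` -/
  adj₁ : iStar ⊣ iIns
  /-- the adjunction `i_* ⊣ i^!` -/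
  adj₂ : iIns ⊣ iShriek
  /-- the adjunction `j_! ⊣ j^*` -/
  adj₃ : jShriek ⊣ jStar
  /-- the adjunction `j^* ⊣ j_*` -/
  adj₄ : jStar ⊣ jIns
  iIns_full : iIns.Full
  iIns_faithful : iIns.Faithful
  jShriek_full : jShriek.Full
  jShriek_faithful : jShriek.Faithful
  jIns_full : jIns.Full
  jIns_faithful : jIns.Faithful
  /-- `im i_* = ker j^*` -/
  im_eq_ker : ∀ X : 𝒞, IsZero (jStar.obj X) ↔ ∃ A₀ : 𝒜, Nonempty (iIns.obj A₀ ≅ X)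

variable {𝒜 : Type u₁} {𝒞 : Type u₂} {ℬ : Type u₃}
  [Category.{v₁} 𝒜] [Category.{v₂} 𝒞] [Category.{v₃} ℬ]
  [Abelian 𝒜] [Abelian 𝒞] [Abelian ℬ]

/-- `0 ⟶ X ⟶ Y ⟶ Z ⟶ 0` is a short exact sequence. -/
def IsSES {𝒟 : Type*} [Category 𝒟] [Abelian 𝒟] {X Y Z : 𝒟}
    (f : X ⟶ Y) (g : Y ⟶ Z) : Prop :=
  ∃ w : f ≫ g = 0, (ShortComplex.mk f g w).ShortExact

namespace RecollementFive

variable (R : Recollement 𝒜 𝒞 ℬ)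

/-- `j^* i_* = 0`. -/
lemma jStar_iIns_isZero (A : 𝒜) : IsZero (R.jStar.obj (R.iIns.obj A)) :=
  (R.im_eq_ker _).mpr ⟨A, ⟨Iso.refl _⟩⟩

/-- Every morphism `j_! B ⟶ i_* A` vanishes. -/
lemma hom_jShriek_to_iIns {B : ℬ} {A : 𝒜} (φ : R.jShriek.obj B ⟶ R.iIns.obj A) : φ = 0 := by
  haveI := R.jShriek_additive
  have h : R.adj₃.homEquiv B (R.iIns.obj A) φ = 0 := (jStar_iIns_isZero R A).eq_of_tgt _ _
  have h2 := congrArg (R.adj₃.homEquiv B (R.iIns.obj A)).symm h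
  rw [Equiv.symm_apply_apply] at h2
  rw [h2, Adjunction.homEquiv_counit, Functor.map_zero, zero_comp]

/-- `i^* j_! = 0`. -/
lemma iStar_jShriek_isZero (B : ℬ) : IsZero (R.iStar.obj (R.jShriek.obj B)) := by
  haveI := R.iStar_additive
  rw [IsZero.iff_id_eq_zero]
  have h := hom_jShriek_to_iIns R (R.adj₁.homEquiv (R.jShriek.obj B) _ (𝟙 _))
  calc 𝟙 (R.iStar.obj (R.jShriek.obj B))
      = (R.adj₁.homEquiv _ _).symm (R.adj₁.homEquiv _ _ (𝟙 _)) :=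
        (Equiv.symm_apply_apply _ _).symm
    _ = 0 := by rw [h, Adjunction.homEquiv_counit, Functor.map_zero, zero_comp]

/-- Under hypothesis (b), every morphism `i_* A ⟶ j_! B` vanishes. -/
lemma hom_iIns_to_jShriek (hb : ∀ B : ℬ, IsZero (R.iShriek.obj (R.jShriek.obj B)))
    {A : 𝒜} {B : ℬ} (φ : R.iIns.obj A ⟶ R.jShriek.obj B) : φ = 0 := by
  haveI := R.iIns_additive
  have h : R.adj₂.homEquiv A (R.jShriek.obj B) φ = 0 := (hb B).eq_of_tgt _ _
  have h2 := congrArg (R.adj₂.homEquiv A (R.jShriek.obj B)).symm h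
  rw [Equiv.symm_apply_apply] at h2
  rw [h2, Adjunction.homEquiv_counit, Functor.map_zero, zero_comp]

/-- (a) ⟹ (b). -/
lemma isZero_of_exact (h : PreservesFiniteLimits R.iStar) (B : ℬ) :
    IsZero (R.iShriek.obj (R.jShriek.obj B)) := by
  haveI := R.iIns_full; haveI := R.iIns_faithful
  haveI := R.iStar_additive; haveI := R.iShriek_additive; haveI := R.iIns_additive
  haveI := R.jStar_additive
  haveI : PreservesColimitsOfSize.{0, 0} R.jStar := R.adj₄.leftAdjoint_preservesColimits
  haveI := Functor.preservesEpimorphisms_of_adjunction R.adj₄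
  haveI := h
  set ε : R.iIns.obj (R.iShriek.obj (R.jShriek.obj B)) ⟶ R.jShriek.obj B :=
    R.adj₂.counit.app (R.jShriek.obj B) with hεdef
  have hε : ε = 0 := by
    have hIm : IsZero (R.jStar.obj (Abelian.image ε)) := by
      have : Epi (R.jStar.map (Abelian.factorThruImage ε)) := inferInstance
      exact IsZero.of_epi (R.jStar.map (Abelian.factorThruImage ε)) (jStar_iIns_isZero R _)
    obtain ⟨A₀, ⟨φ⟩⟩ := (R.im_eq_ker _).mp hIm
    haveI : Mono (φ.hom ≫ Abelian.image.ι ε) := mono_comp _ _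
    have hz : IsZero (R.iStar.obj (R.iIns.obj A₀)) :=
      IsZero.of_mono (R.iStar.map (φ.hom ≫ Abelian.image.ι ε)) (iStar_jShriek_isZero R B)
    have hA₀ : IsZero A₀ := IsZero.of_iso hz (asIso (R.adj₁.counit.app A₀)).symm
    have hIm' : IsZero (Abelian.image ε) :=
      IsZero.of_iso (R.iIns.map_isZero hA₀) φ.symm
    have : Abelian.image.ι ε = 0 := hIm'.eq_of_src _ _
    rw [← Abelian.image.fac ε, this, comp_zero]
  rw [IsZero.iff_id_eq_zero, ← R.adj₂.right_triangle_components (R.jShriek.obj B),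
    ← hεdef, hε, Functor.map_zero, comp_zero]

section SnakeDirection

/-- The canonical short complex `j_! j^* X ⟶ X ⟶ i_* i^* X`. -/
noncomputable def row (X : 𝒞) : ShortComplex 𝒞 :=
  ShortComplex.mk (R.adj₃.counit.app X) (R.adj₁.unit.app X) (hom_jShriek_to_iIns R _)

@[simp] lemma row_f (X : 𝒞) : (row R X).f = R.adj₃.counit.app X := rfl

@[simp] lemma row_g (X : 𝒞) : (row R X).g = R.adj₁.unit.app X := rfl

/-- The unit of `i^* ⊣ i_*` is epi. -/
lemma epi_unit (X : 𝒞) : Epi (R.adj₁.unit.app X) := by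
  haveI := R.iIns_additive; haveI := R.iIns_full; haveI := R.iIns_faithful
  haveI := R.jStar_additive
  haveI : PreservesColimitsOfSize.{0, 0} R.jStar := R.adj₄.leftAdjoint_preservesColimits
  set η : X ⟶ R.iIns.obj (R.iStar.obj X) := R.adj₁.unit.app X with hη
  have h1 : IsZero (cokernel (R.jStar.map η)) :=
    IsZero.of_epi (cokernel.π (R.jStar.map η)) (jStar_iIns_isZero R _)
  have h2 : IsZero (R.jStar.obj (cokernel η)) :=
    IsZero.of_iso h1 (PreservesCokernel.iso R.jStar η)
  obtain ⟨A₂, ⟨φ⟩⟩ := (R.im_eq_ker _).mp h2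
  obtain ⟨qbar, hq⟩ := R.iIns_full.map_surjective (cokernel.π η ≫ φ.inv)
  have h4 : η ≫ R.iIns.map qbar = 0 := by rw [hq, cokernel.condition_assoc, zero_comp]
  have h5 : qbar = 0 := by
    apply (R.adj₁.homEquiv X A₂).injective
    rw [Adjunction.homEquiv_unit, Adjunction.homEquiv_unit, h4, Functor.map_zero, comp_zero]
  have h6 : cokernel.π η = 0 := by
    have hz : cokernel.π η ≫ φ.inv = 0 := by rw [← hq, h5, Functor.map_zero]
    calc cokernel.π η = (cokernel.π η ≫ φ.inv) ≫ φ.hom := by simp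
      _ = 0 := by rw [hz, zero_comp]
  exact Abelian.epi_of_cokernel_π_eq_zero _ h6

/-- The row `j_! j^* X ⟶ X ⟶ i_* i^* X` is exact. -/
lemma row_exact (X : 𝒞) : (row R X).Exact := by
  haveI := R.iIns_additive; haveI := R.iIns_full; haveI := R.iIns_faithful
  haveI := R.jShriek_full; haveI := R.jShriek_faithful
  haveI := R.jStar_additive
  haveI : PreservesColimitsOfSize.{0, 0} R.jStar := R.adj₄.leftAdjoint_preservesColimits
  set ε : R.jShriek.obj (R.jStar.obj X) ⟶ X := R.adj₃.counit.app X with hεdef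
  set η : X ⟶ R.iIns.obj (R.iStar.obj X) := R.adj₁.unit.app X with hηdef
  have w : ε ≫ η = 0 := hom_jShriek_to_iIns R _
  haveI : IsIso (R.jStar.map ε) := by rw [hεdef]; infer_instance
  have h1 : IsZero (cokernel (R.jStar.map ε)) :=
    IsZero.of_epi_eq_zero (cokernel.π (R.jStar.map ε)) (cokernel.π_of_epi _)
  have h2 : IsZero (R.jStar.obj (cokernel ε)) :=
    IsZero.of_iso h1 (PreservesCokernel.iso R.jStar ε)
  obtain ⟨A₂, ⟨φ⟩⟩ := (R.im_eq_ker _).mp h2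
  set kbar : R.iStar.obj X ⟶ A₂ := (R.adj₁.homEquiv X A₂).symm (cokernel.π ε ≫ φ.inv) with hkbar
  have hk : η ≫ R.iIns.map kbar = cokernel.π ε ≫ φ.inv := by
    have h := (R.adj₁.homEquiv X A₂).apply_symm_apply (cokernel.π ε ≫ φ.inv)
    rwa [Adjunction.homEquiv_unit] at h
  set k : R.iIns.obj (R.iStar.obj X) ⟶ cokernel ε := R.iIns.map kbar ≫ φ.hom with hkdef
  have hk2 : η ≫ k = cokernel.π ε := by
    rw [hkdef, ← Category.assoc, hk, Category.assoc, φ.inv_hom_id, Category.comp_id]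
  set hmap : cokernel ε ⟶ R.iIns.obj (R.iStar.obj X) := cokernel.desc ε η w with hhdef
  have hπh : cokernel.π ε ≫ hmap = η := cokernel.π_desc _ _ _
  have hh1 : hmap ≫ k = 𝟙 _ := by
    rw [← cancel_epi (cokernel.π ε), ← Category.assoc, hπh, hk2, Category.comp_id]
  haveI := epi_unit R X
  have hh2 : k ≫ hmap = 𝟙 _ := by
    rw [← cancel_epi η, ← Category.assoc, hk2, hπh, Category.comp_id]
  haveI : IsIso hmap := ⟨k, hh1, hh2⟩
  have e : ShortComplex.mk ε (cokernel.π ε) (cokernel.condition ε) ≅ row R X :=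
    ShortComplex.isoMk (Iso.refl _) (Iso.refl _) (@asIso _ _ _ _ hmap this)
      (by exact (Category.id_comp _).trans (Category.comp_id _).symm) (by exact (Category.id_comp _).trans hπh.symm)
  exact (ShortComplex.exact_iff_of_iso e).1 (ShortComplex.exact_cokernel ε)

/-- Under hypothesis (b), the counit of `j_! ⊣ j^*` is mono. -/
lemma mono_counit (hb : ∀ B : ℬ, IsZero (R.iShriek.obj (R.jShriek.obj B))) (X : 𝒞) : Mono (R.adj₃.counit.app X) := by
  haveI := R.jShriek_full; haveI := R.jShriek_faithful
  haveI := R.jStar_additive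
  haveI : PreservesLimitsOfSize.{0, 0} R.jStar := R.adj₃.rightAdjoint_preservesLimits
  set ε : R.jShriek.obj (R.jStar.obj X) ⟶ X := R.adj₃.counit.app X with hεdef
  haveI : IsIso (R.jStar.map ε) := by rw [hεdef]; infer_instance
  have h1 : IsZero (kernel (R.jStar.map ε)) :=
    IsZero.of_mono_eq_zero (kernel.ι (R.jStar.map ε)) (kernel.ι_of_mono _)
  have h2 : IsZero (R.jStar.obj (kernel ε)) :=
    IsZero.of_iso h1 (PreservesKernel.iso R.jStar ε)
  obtain ⟨A₃, ⟨φ⟩⟩ := (R.im_eq_ker _).mp h2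
  have hz : φ.hom ≫ kernel.ι ε = 0 := hom_iIns_to_jShriek R hb _
  have hι : kernel.ι ε = 0 := by
    calc kernel.ι ε = φ.inv ≫ (φ.hom ≫ kernel.ι ε) := by simp
      _ = 0 := by rw [hz, comp_zero]
  exact Abelian.mono_of_kernel_ι_eq_zero _ hι

/-- Under hypothesis (b), `i^*` preserves monomorphisms. -/
lemma iStar_map_mono (hb : ∀ B : ℬ, IsZero (R.iShriek.obj (R.jShriek.obj B)))
    {X Y : 𝒞} (f : X ⟶ Y) [Mono f] : Mono (R.iStar.map f) := by
  haveI := R.iIns_additive; haveI := R.iIns_full; haveI := R.iIns_faithful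
  haveI := R.jShriek_additive; haveI := R.jStar_additive
  haveI : PreservesLimitsOfSize.{0, 0} R.jStar := R.adj₃.rightAdjoint_preservesLimits
  haveI : PreservesColimitsOfSize.{0, 0} R.jShriek := R.adj₃.leftAdjoint_preservesColimits
  let v : row R X ⟶ row R Y :=
    { τ₁ := R.jShriek.map (R.jStar.map f)
      τ₂ := f
      τ₃ := R.iIns.map (R.iStar.map f)
      comm₁₂ := R.adj₃.counit.naturality f
      comm₂₃ := by
        have h := R.adj₁.unit.naturality f
        simp only [Functor.id_map] at h
        exact h }
  haveI : Mono (row R Y).f := mono_counit R hb Y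
  haveI : Epi (row R X).g := epi_unit R X
  let D : ShortComplex.SnakeInput 𝒞 :=
    { L₀ := kernel v
      L₁ := row R X
      L₂ := row R Y
      L₃ := cokernel v
      v₀₁ := kernel.ι v
      v₁₂ := v
      v₂₃ := cokernel.π v
      w₀₂ := kernel.condition v
      w₁₃ := cokernel.condition v
      h₀ := kernelIsKernel v
      h₃ := cokernelIsCokernel v
      L₁_exact := row_exact R X
      epi_L₁_g := inferInstance
      L₂_exact := row_exact R Y
      mono_L₂_f := inferInstance }
  -- `D.L₀.X₂` is a kernel of `f`, hence zero
  have hX₂ : IsZero D.L₀.X₂ := by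
    have hker : IsZero (kernel D.v₁₂.τ₂) := by
      have : Mono D.v₁₂.τ₂ := (inferInstance : Mono f)
      exact IsZero.of_mono_eq_zero (kernel.ι D.v₁₂.τ₂) (kernel.ι_of_mono _)
    exact IsZero.of_iso hker
      (IsLimit.conePointUniqueUpToIso D.h₀τ₂ (limit.isLimit _))
  have hg0 : D.L₀.g = 0 := hX₂.eq_of_src _ _
  haveI hδ : Mono D.δ := D.L₁'_exact.mono_g hg0
  -- `D.L₀.X₃` lies in the image of `i_*`
  have e₃ : D.L₀.X₃ ≅ kernel D.v₁₂.τ₃ :=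
    IsLimit.conePointUniqueUpToIso D.h₀τ₃ (limit.isLimit _)
  have hz3 : IsZero (R.jStar.obj D.L₀.X₃) := by
    have h1 : IsZero (kernel (R.jStar.map D.v₁₂.τ₃)) :=
      IsZero.of_mono (kernel.ι (R.jStar.map D.v₁₂.τ₃)) (jStar_iIns_isZero R _)
    have h2 : IsZero (R.jStar.obj (kernel D.v₁₂.τ₃)) :=
      IsZero.of_iso h1 (PreservesKernel.iso R.jStar D.v₁₂.τ₃)
    exact IsZero.of_iso h2 (R.jStar.mapIso e₃)
  obtain ⟨A₀, ⟨φ⟩⟩ := (R.im_eq_ker _).mp hz3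
  -- `D.L₃.X₁` lies in the image of `j_!`
  have e₁ : D.L₃.X₁ ≅ cokernel D.v₁₂.τ₁ :=
    IsColimit.coconePointUniqueUpToIso D.h₃τ₁ (colimit.isColimit _)
  have e₁' : cokernel D.v₁₂.τ₁ ≅ R.jShriek.obj (cokernel (R.jStar.map f)) :=
    (PreservesCokernel.iso R.jShriek (R.jStar.map f)).symm
  -- the connecting map, conjugated, is a mono `i_* A₀ ⟶ j_! B`, hence zero
  have hψ : (φ.hom ≫ D.δ) ≫ (e₁ ≪≫ e₁').hom = 0 := hom_iIns_to_jShriek R hb _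
  haveI : Mono ((φ.hom ≫ D.δ) ≫ (e₁ ≪≫ e₁').hom) := mono_comp _ _
  have hA₀ : IsZero (R.iIns.obj A₀) :=
    IsZero.of_mono_eq_zero _ hψ
  have hL₀X₃ : IsZero D.L₀.X₃ := IsZero.of_iso hA₀ φ.symm
  have hkτ₃ : IsZero (kernel D.v₁₂.τ₃) := IsZero.of_iso hL₀X₃ e₃.symm
  have hk0 : kernel.ι D.v₁₂.τ₃ = 0 := hkτ₃.eq_of_src _ _
  have hmono : Mono (R.iIns.map (R.iStar.map f)) :=
    Abelian.mono_of_kernel_ι_eq_zero _ hk0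
  exact R.iIns.mono_of_mono_map hmono

/-- Under hypothesis (b), `i^*` is left exact. -/
lemma preservesFiniteLimits_of_hb (hb : ∀ B : ℬ, IsZero (R.iShriek.obj (R.jShriek.obj B))) :
    PreservesFiniteLimits R.iStar := by
  haveI := R.iStar_additive
  haveI : PreservesColimitsOfSize.{0, 0} R.iStar := R.adj₁.leftAdjoint_preservesColimits
  haveI : PreservesFiniteColimits R.iStar :=
    PreservesColimitsOfSize.preservesFiniteColimits R.iStar
  have h1 : ∀ (S : ShortComplex 𝒞), S.ShortExact →
      ((S.map R.iStar).Exact ∧ Epi (R.iStar.map S.g)) :=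
    ((Functor.preservesFiniteColimits_tfae R.iStar).out 3 0).mp ‹_›
  apply ((Functor.preservesFiniteLimits_tfae R.iStar).out 0 3).mp
  intro S hS
  haveI := hS.mono_f
  exact ⟨(h1 S hS).1, iStar_map_mono R hb S.f⟩

end SnakeDirection

end RecollementFive

open RecollementFive in
/-- The following are equivalent: (a) `i^*` is an exact functor; (b) `i^! j_! = 0`;
(c) `i^! j_! j^* = 0`. -/
theorem stmt_5 (R : Recollement 𝒜 𝒞 ℬ) :
    List.TFAE
      [Nonempty (PreservesFiniteLimits R.iStar) ∧
          Nonempty (PreservesFiniteColimits R.iStar),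
        ∀ Y : ℬ, IsZero (R.iShriek.obj (R.jShriek.obj Y)),
        ∀ X : 𝒞, IsZero (R.iShriek.obj (R.jShriek.obj (R.jStar.obj X)))] := by
  tfae_have 1 → 2
  | ⟨⟨hl⟩, _⟩, Y => isZero_of_exact R hl Y
  tfae_have 2 → 1
  | hb => by
    haveI : PreservesColimitsOfSize.{0, 0} R.iStar := R.adj₁.leftAdjoint_preservesColimits
    exact ⟨⟨preservesFiniteLimits_of_hb R hb⟩,
      ⟨PreservesColimitsOfSize.preservesFiniteColimits R.iStar⟩⟩
  tfae_have 2 → 3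
  | hb, X => hb _
  tfae_have 3 → 2
  | h, Y => by
    haveI := R.jShriek_full; haveI := R.jShriek_faithful
    have e : Y ≅ R.jStar.obj (R.jShriek.obj Y) := asIso (R.adj₃.unit.app Y)
    exact IsZero.of_iso (h (R.jShriek.obj Y)) (R.iShriek.mapIso (R.jShriek.mapIso e))
  tfae_finish
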